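/- Let G be a minimal basic generator matrix with controller canonical form (A,B,C,D), let u ∈ F[z]^k, v = uG with v_0 ≠ 0 and deg v = N > 0, and let x = uB(z^{-1}I − A)^{-1} be the state sequence. For L ∈ {1,…,N}, the state x_L is zero if and only if v decomposes as v = ṽ + v̂ with ṽ, v̂ nonzero polynomial codewords of im G, deg ṽ < L, and v̂ ∈ z^L F[z]^n. -/

import Mathlib

open Polynomial Matrix
open scoped Classical

/-- Embedding of polynomials into formal Laurent series. -/
noncomputable def polyToLS (F : Type*) [Field F] : Polynomial F →+* LaurentSeries F :=
  (HahnSeries.ofPowerSeries ℤ F).comp Polynomial.coeToPowerSeries.ringHom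

/-- The convolutional code generated by `G`: all `u·G` with `u` a Laurent-series row vector. -/
noncomputable def convCode {F : Type*} [Field F] {k n : ℕ}
    (G : Matrix (Fin k) (Fin n) (Polynomial F)) : Set (Fin n → LaurentSeries F) :=
  {v | ∃ u : Fin k → LaurentSeries F, v = Matrix.vecMul u (G.map (polyToLS F))}

/-- `G` is basic: it has a polynomial right inverse. -/
def IsBasic {F : Type*} [Field F] {k n : ℕ} (G : Matrix (Fin k) (Fin n) (Polynomial F)) : Prop :=
  ∃ H : Matrix (Fin n) (Fin k) (Polynomial F), G * H = 1

/-- The overall constraint length: maximal degree of a (full-size) `k`-minor of `G`. -/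
noncomputable def ocl {F : Type*} [Field F] {k n : ℕ}
    (G : Matrix (Fin k) (Fin n) (Polynomial F)) : ℕ :=
  Finset.univ.sup fun f : Fin k ↪ Fin n => ((G.submatrix id f).det).natDegree

/-- The degree of the `i`-th row of `G` (in `WithBot ℕ`, so `deg 0 = ⊥`). -/
noncomputable def rowDeg {F : Type*} [Field F] {k n : ℕ}
    (G : Matrix (Fin k) (Fin n) (Polynomial F)) (i : Fin k) : WithBot ℕ :=
  Finset.univ.sup fun j => (G i j).degree

/-- The state-index set of the controller canonical form for row degrees `γ`. -/
abbrev StateIdx {k : ℕ} (γ : Fin k → ℕ) := Σ i : Fin k, Fin (γ i)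

/-- State matrix `A` of the controller canonical form (block diagonal nilpotent shifts). -/
def ccfA (F : Type*) [Field F] {k : ℕ} (γ : Fin k → ℕ) :
    Matrix (StateIdx γ) (StateIdx γ) F :=
  fun s t => if s.1 = t.1 ∧ (t.2 : ℕ) = (s.2 : ℕ) + 1 then 1 else 0

/-- Input matrix `B` of the controller canonical form. -/
def ccfB (F : Type*) [Field F] {k : ℕ} (γ : Fin k → ℕ) :
    Matrix (Fin k) (StateIdx γ) F :=
  fun i s => if s.1 = i ∧ (s.2 : ℕ) = 0 then 1 else 0

/-- Output matrix `C` of the controller canonical form: higher coefficient rows of `G`. -/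
noncomputable def ccfC {F : Type*} [Field F] {k n : ℕ} (γ : Fin k → ℕ)
    (G : Matrix (Fin k) (Fin n) (Polynomial F)) : Matrix (StateIdx γ) (Fin n) F :=
  fun s j => (G s.1 j).coeff ((s.2 : ℕ) + 1)

/-- Feedthrough matrix `D`: the constant coefficient matrix of `G`. -/
noncomputable def ccfD {F : Type*} [Field F] {k n : ℕ}
    (G : Matrix (Fin k) (Fin n) (Polynomial F)) : Matrix (Fin k) (Fin n) F :=
  fun i j => (G i j).coeff 0

/-- Hamming weight of a vector. -/
noncomputable def hamWt {F : Type*} [Field F] {ι : Type*} (v : ι → F) : ℕ :=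
  Nat.card {j : ι // v j ≠ 0}



section Aux

variable {F : Type*} [Field F] {k : ℕ}

lemma polyToLS_coeff (p : Polynomial F) (m : ℕ) :
    (polyToLS F p).coeff (m : ℤ) = p.coeff m := by
  show ((↑(↑p : PowerSeries F) : LaurentSeries F)).coeff (m : ℤ) = _
  rw [PowerSeries.coeff_coe]
  simp [Polynomial.coeff_coe]


variable {F : Type*} [Field F] {k : ℕ}

noncomputable def invM (F : Type*) [Field F] {k : ℕ} (γ : Fin k → ℕ) :
    Matrix (StateIdx γ) (StateIdx γ) (LaurentSeries F) :=
  fun s t => if s.1 = t.1 ∧ (s.2 : ℕ) ≤ (t.2 : ℕ)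
    then (polyToLS F X) ^ ((t.2 : ℕ) - (s.2 : ℕ)) else 0


lemma sigma_mk_ne {γ : Fin k → ℕ} {i : Fin k} {a b : Fin (γ i)} (h : (a:ℕ) ≠ (b:ℕ)) :
    (⟨i,a⟩ : StateIdx γ) ≠ ⟨i,b⟩ := fun hc =>
  h (congrArg Fin.val (eq_of_heq (Sigma.mk.inj_iff.mp hc).2))

lemma sigma_mk_ne' {γ : Fin k → ℕ} {i i' : Fin k} {a : Fin (γ i)} {b : Fin (γ i')}
    (h : i ≠ i') : (⟨i,a⟩ : StateIdx γ) ≠ ⟨i',b⟩ := fun hc => h (Sigma.mk.inj_iff.mp hc).1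

lemma invM_apply_same (γ : Fin k → ℕ) (i : Fin k) (a b : Fin (γ i)) :
    invM F γ ⟨i,a⟩ ⟨i,b⟩ = if (a:ℕ) ≤ (b:ℕ) then (polyToLS F X) ^ ((b:ℕ) - (a:ℕ)) else 0 := by
  simp [invM]

lemma invM_apply_ne (γ : Fin k → ℕ) {i i' : Fin k} (h : i ≠ i') (a : Fin (γ i)) (b : Fin (γ i')) :
    invM F γ ⟨i,a⟩ ⟨i',b⟩ = 0 := by
  simp [invM, h]

lemma key_inv (γ : Fin k → ℕ) :
    (1 - (polyToLS F Polynomial.X) •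
        (ccfA F γ).map (fun a => polyToLS F (Polynomial.C a))) * invM F γ = 1 := by
  refine Matrix.ext fun s u => ?_
  rw [Matrix.sub_mul, Matrix.one_mul, Matrix.sub_apply, Matrix.mul_apply]
  have hmap : ∀ t : StateIdx γ, ((ccfA F γ).map (fun a => polyToLS F (Polynomial.C a))) s t
      = if s.1 = t.1 ∧ (t.2 : ℕ) = (s.2 : ℕ) + 1 then 1 else 0 := by
    intro t
    simp [Matrix.map_apply, ccfA, apply_ite (fun a : F => polyToLS F (Polynomial.C a))]
  have hsum : (∑ t : StateIdx γ, ((polyToLS F Polynomial.X) •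
        (ccfA F γ).map (fun a => polyToLS F (Polynomial.C a))) s t * invM F γ t u) =
      (polyToLS F Polynomial.X) *
      (if h : (s.2 : ℕ) + 1 < γ s.1 then invM F γ ⟨s.1, ⟨(s.2 : ℕ) + 1, h⟩⟩ u else 0) := by
    simp only [Matrix.smul_apply, smul_eq_mul, hmap]
    split
    · next h =>
      rw [Finset.sum_eq_single (⟨s.1, ⟨(s.2 : ℕ) + 1, h⟩⟩ : StateIdx γ)]
      · rw [if_pos ⟨rfl, rfl⟩, mul_one]
      · intro t _ hne
        rcases t with ⟨j, b⟩
        split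
        · next hc =>
          exfalso; apply hne
          obtain ⟨h1, h2⟩ := hc
          subst h1
          exact Sigma.ext rfl (heq_of_eq (Fin.ext h2))
        · rw [mul_zero, zero_mul]
      · intro h; exact absurd (Finset.mem_univ _) h
    · next h =>
      rw [mul_zero]
      apply Finset.sum_eq_zero
      intro t _
      rcases t with ⟨j, b⟩
      split
      · next hc =>
        exfalso
        obtain ⟨h1, h2⟩ := hc
        subst h1
        exact h (h2 ▸ b.isLt)
      · rw [mul_zero, zero_mul]
  rw [hsum]
  rcases s with ⟨i, a⟩
  rcases u with ⟨i', b⟩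
  by_cases hii : i = i'
  · subst hii
    rcases lt_trichotomy (a : ℕ) (b : ℕ) with hab | hab | hab
    · rw [Matrix.one_apply_ne (sigma_mk_ne (by omega))]
      have hlt : (a : ℕ) + 1 < γ i := lt_of_le_of_lt hab b.isLt
      rw [dif_pos hlt, invM_apply_same, invM_apply_same,
        if_pos (le_of_lt hab), if_pos (show ((⟨(a:ℕ)+1, hlt⟩ : Fin (γ i)) : ℕ) ≤ (b:ℕ) by simpa using hab)]
      have h2 : (b : ℕ) - (a : ℕ) = ((b : ℕ) - ((a : ℕ) + 1)) + 1 := by omega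
      rw [show ((b:ℕ) - ((⟨(a:ℕ)+1, hlt⟩ : Fin (γ i)) : ℕ)) = (b:ℕ) - ((a:ℕ)+1) from rfl,
        h2, pow_succ]
      ring
    · obtain rfl : a = b := Fin.ext hab
      rw [Matrix.one_apply_eq, invM_apply_same, if_pos le_rfl, Nat.sub_self, pow_zero]
      split
      · next h =>
        rw [invM_apply_same, if_neg (show ¬((a:ℕ)+1 ≤ (a:ℕ)) from by omega)]
        rw [mul_zero, sub_zero]
      · rw [mul_zero, sub_zero]
    · rw [Matrix.one_apply_ne (sigma_mk_ne (by omega)),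
        invM_apply_same, if_neg (by omega)]
      split
      · next h =>
        rw [invM_apply_same, if_neg (show ¬((a:ℕ)+1 ≤ (b:ℕ)) from by omega)]
        rw [mul_zero, sub_zero]
      · rw [mul_zero, sub_zero]
  · rw [Matrix.one_apply_ne (sigma_mk_ne' hii), invM_apply_ne γ hii]
    split
    · next h =>
      rw [invM_apply_ne γ hii]
      rw [mul_zero, sub_zero]
    · rw [mul_zero, sub_zero]

lemma BM_apply (γ : Fin k → ℕ) (i : Fin k) (s : StateIdx γ) :
    ((ccfB F γ).map (fun a => polyToLS F (Polynomial.C a)) * invM F γ) i s =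
      if s.1 = i then (polyToLS F X) ^ (s.2 : ℕ) else 0 := by
  rw [Matrix.mul_apply]
  have hmap : ∀ t : StateIdx γ, ((ccfB F γ).map (fun a => polyToLS F (Polynomial.C a))) i t
      = if t.1 = i ∧ (t.2 : ℕ) = 0 then 1 else 0 := by
    intro t
    simp [Matrix.map_apply, ccfB, apply_ite (fun a : F => polyToLS F (Polynomial.C a))]
  simp only [hmap]
  by_cases h : 0 < γ i
  · rw [Finset.sum_eq_single (⟨i, ⟨0, h⟩⟩ : StateIdx γ)]
    · rw [if_pos ⟨rfl, rfl⟩, one_mul]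
      rcases s with ⟨i', b⟩
      by_cases hii : i = i'
      · subst hii
        rw [invM_apply_same, if_pos (Nat.zero_le _), Nat.sub_zero]
        simp
      · rw [invM_apply_ne γ hii, if_neg (fun hc => hii hc.symm)]
    · intro t _ hne
      rcases t with ⟨j, b⟩
      split
      · next hc =>
        exfalso; apply hne
        obtain ⟨h1, h2⟩ := hc
        subst h1
        exact Sigma.ext rfl (heq_of_eq (Fin.ext h2))
      · rw [zero_mul]
    · intro hc; exact absurd (Finset.mem_univ _) hc
  · rw [if_neg (fun hc => h (by rw [← hc]; exact s.2.pos))]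
    apply Finset.sum_eq_zero
    intro t _
    rcases t with ⟨j, b⟩
    split
    · next hc => exact absurd (by rw [← hc.1]; exact b.pos) h
    · rw [zero_mul]

lemma x_formula (γ : Fin k → ℕ) (u : Fin k → Polynomial F)
    (x : StateIdx γ → LaurentSeries F)
    (hx : x = (polyToLS F Polynomial.X) •
      Matrix.vecMul (fun i => polyToLS F (u i))
        ((ccfB F γ).map (fun a => polyToLS F (Polynomial.C a)) *
          (1 - (polyToLS F Polynomial.X) •
            (ccfA F γ).map (fun a => polyToLS F (Polynomial.C a)))⁻¹))
    (i : Fin k) (a : Fin (γ i)) :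
    x ⟨i, a⟩ = polyToLS F (u i * Polynomial.X ^ ((a : ℕ) + 1)) := by
  have hinv : (1 - (polyToLS F Polynomial.X) •
      (ccfA F γ).map (fun a => polyToLS F (Polynomial.C a)))⁻¹ = invM F γ :=
    Matrix.inv_eq_right_inv (key_inv γ)
  rw [hx, hinv]
  rw [Pi.smul_apply, smul_eq_mul]
  have : Matrix.vecMul (fun i => polyToLS F (u i))
      ((ccfB F γ).map (fun a => polyToLS F (Polynomial.C a)) * invM F γ) ⟨i, a⟩
      = polyToLS F (u i) * (polyToLS F X) ^ (a : ℕ) := by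
    rw [Matrix.vecMul, dotProduct]
    simp only [BM_apply]
    rw [Finset.sum_eq_single i]
    · rw [if_pos rfl]
    · intro j _ hne
      rw [if_neg hne.symm, mul_zero]
    · intro hc; exact absurd (Finset.mem_univ _) hc
  rw [this, _root_.map_mul, map_pow, pow_succ]
  ring

lemma coeff_prod_varying {ι : Type*} (s : Finset ι) (p : ι → Polynomial F) (d : ι → ℕ)
    (h : ∀ i ∈ s, (p i).natDegree ≤ d i) :
    (∏ i ∈ s, p i).coeff (∑ i ∈ s, d i) = ∏ i ∈ s, (p i).coeff (d i) := by
  induction s using Finset.cons_induction with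
  | empty => simp
  | cons a s ha ih =>
    rw [Finset.prod_cons, Finset.sum_cons, Finset.prod_cons,
      Polynomial.coeff_mul_add_eq_of_natDegree_le (h a (Finset.mem_cons_self a s))
        (le_trans (Polynomial.natDegree_prod_le s p)
          (Finset.sum_le_sum fun i hi => h i (Finset.mem_cons_of_mem hi))),
      ih fun i hi => h i (Finset.mem_cons_of_mem hi)]

variable {n : ℕ}

lemma det_coeff_sum (M : Matrix (Fin k) (Fin k) (Polynomial F)) (γ : Fin k → ℕ)
    (h : ∀ i j, (M i j).natDegree ≤ γ i) :
    (M.det).coeff (∑ i, γ i) = (Matrix.of fun i j => (M i j).coeff (γ i)).det := by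
  rw [Matrix.det_apply, Matrix.det_apply, Polynomial.finset_sum_coeff]
  apply Finset.sum_congr rfl
  intro σ _
  rw [Polynomial.coeff_smul]
  congr 1
  rw [← Equiv.sum_comp σ γ]
  rw [coeff_prod_varying Finset.univ _ (fun i => γ (σ i)) (fun i _ => h (σ i) i)]
  rfl

lemma Gh_rank (G : Matrix (Fin k) (Fin n) (Polynomial F)) (γ : Fin k → ℕ)
    (hbasic : ∃ H : Matrix (Fin n) (Fin k) (Polynomial F), G * H = 1)
    (hdeg : ∀ i j, (G i j).natDegree ≤ γ i)
    (hmin : ocl G = ∑ i, γ i)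
    (c : Fin k → F) (hc : Matrix.vecMul c (Matrix.of fun i j => (G i j).coeff (γ i)) = 0) :
    c = 0 := by
  by_cases hs : ∑ i, γ i = 0
  · -- all γ i = 0; use the right inverse evaluated at 0
    have hγ0 : ∀ i, γ i = 0 := by
      intro i
      exact (Finset.sum_eq_zero_iff.mp hs) i (Finset.mem_univ i)
    obtain ⟨H, hH⟩ := hbasic
    set e : Polynomial F →+* F := Polynomial.evalRingHom 0
    have hmul : (G.map e) * (H.map e) = 1 := by
      rw [← Matrix.map_mul, hH, Matrix.map_one e (map_zero e) (map_one e)]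
    have hGh : (Matrix.of fun i j => (G i j).coeff (γ i)) = G.map e := by
      ext i j
      simp only [Matrix.of_apply, Matrix.map_apply, hγ0 i]
      simp [e, Polynomial.coeff_zero_eq_eval_zero]
    rw [hGh] at hc
    have : Matrix.vecMul c ((G.map e) * (H.map e)) = 0 := by
      rw [← Matrix.vecMul_vecMul, hc, Matrix.zero_vecMul]
    rwa [hmul, Matrix.vecMul_one] at this
  · -- some minor has degree ∑ γ
    have hne : (Finset.univ : Finset (Fin k ↪ Fin n)).Nonempty := by
      rcases Finset.eq_empty_or_nonempty (Finset.univ : Finset (Fin k ↪ Fin n)) with he | h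
      · exfalso
        apply hs
        rw [← hmin, ocl, he, Finset.sup_empty]
        rfl
      · exact h
    obtain ⟨f, _, hf⟩ := Finset.exists_mem_eq_sup Finset.univ hne
      (fun f : Fin k ↪ Fin n => ((G.submatrix id f).det).natDegree)
    have hf' : ((G.submatrix id f).det).natDegree = ∑ i, γ i := by
      rw [← hf]; exact hmin
    have hdet_ne : (G.submatrix id f).det ≠ 0 := by
      intro h0
      rw [h0, Polynomial.natDegree_zero] at hf'
      exact hs hf'.symm
    have hcoeff_ne : ((G.submatrix id f).det).coeff (∑ i, γ i) ≠ 0 := by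
      rw [← hf']
      exact Polynomial.coeff_ne_zero_of_eq_degree (Polynomial.degree_eq_natDegree hdet_ne)
    have hMh : (Matrix.of fun i j : Fin k => (G i (f j)).coeff (γ i)).det ≠ 0 := by
      have hds := det_coeff_sum (G.submatrix id f) γ (fun i j => hdeg i (f j))
      rw [hds] at hcoeff_ne
      exact hcoeff_ne
    set Msub : Matrix (Fin k) (Fin k) F := Matrix.of fun i j : Fin k => (G i (f j)).coeff (γ i)
    have hcsub : Matrix.vecMul c Msub = 0 := by
      funext j
      have := congrFun hc (f j)
      simpa [Msub, Matrix.vecMul, dotProduct] using this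
    have hunit : IsUnit Msub.det := (Ne.isUnit hMh)
    have : Matrix.vecMul c (Msub * Msub⁻¹) = 0 := by
      rw [← Matrix.vecMul_vecMul, hcsub, Matrix.zero_vecMul]
    rwa [Matrix.mul_nonsing_inv _ hunit, Matrix.vecMul_one] at this

lemma pd_lemma (G : Matrix (Fin k) (Fin n) (Polynomial F)) (γ : Fin k → ℕ)
    (hdeg : ∀ i j, (G i j).natDegree ≤ γ i)
    (hrank : ∀ c : Fin k → F,
      Matrix.vecMul c (Matrix.of fun i j => (G i j).coeff (γ i)) = 0 → c = 0)
    (w : Fin k → Polynomial F) (L : ℕ)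
    (hw : ∀ j, (Matrix.vecMul w G j).degree < (L : WithBot ℕ)) :
    ∀ i t, L ≤ t + γ i → (w i).coeff t = 0 := by
  by_contra hcon
  push_neg at hcon
  obtain ⟨i0, t0, hLt, h0⟩ := hcon
  set S := Finset.univ.filter (fun i => w i ≠ 0) with hS
  have hi0S : i0 ∈ S := by
    simp only [hS, Finset.mem_filter, Finset.mem_univ, true_and]
    intro h
    rw [h] at h0
    exact h0 rfl
  obtain ⟨D, hD⟩ : ∃ D, D = S.sup (fun i => (w i).natDegree + γ i) := ⟨_, rfl⟩
  have hsup0 : (w i0).natDegree + γ i0 ≤ S.sup (fun i => (w i).natDegree + γ i) :=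
    Finset.le_sup (f := fun i => (w i).natDegree + γ i) hi0S
  have hDL : L ≤ D := by
    rw [hD]
    have := Polynomial.le_natDegree_of_ne_zero h0
    omega
  obtain ⟨c, hcdef⟩ : ∃ c : Fin k → F,
      c = fun i => if γ i ≤ D then (w i).coeff (D - γ i) else 0 := ⟨_, rfl⟩
  have key : ∀ j, (Matrix.vecMul w G j).coeff D =
      Matrix.vecMul c (Matrix.of fun i j => (G i j).coeff (γ i)) j := by
    intro j
    rw [Matrix.vecMul, dotProduct, Polynomial.finset_sum_coeff,
      Matrix.vecMul, dotProduct]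
    apply Finset.sum_congr rfl
    intro i _
    by_cases hγD : γ i ≤ D
    · have h1 : (w i).natDegree ≤ D - γ i := by
        by_cases hwz : w i = 0
        · rw [hwz, Polynomial.natDegree_zero]; exact Nat.zero_le _
        · have hiS : i ∈ S := by
            simp [hS, hwz]
          have h3 : (w i).natDegree + γ i ≤ S.sup (fun i => (w i).natDegree + γ i) :=
            Finset.le_sup (f := fun i => (w i).natDegree + γ i) hiS
          rw [← hD] at h3
          omega
      have hDeq : D = (D - γ i) + γ i := by omega
      rw [hDeq, Polynomial.coeff_mul_add_eq_of_natDegree_le h1 (hdeg i j)]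
      simp [hcdef, hγD, Matrix.of_apply]
    · have hwz : w i = 0 := by
        by_contra hwz
        have hiS : i ∈ S := by simp [hS, hwz]
        have h3 : (w i).natDegree + γ i ≤ S.sup (fun i => (w i).natDegree + γ i) :=
          Finset.le_sup (f := fun i => (w i).natDegree + γ i) hiS
        rw [← hD] at h3
        omega
      rw [hwz]
      simp [hcdef, hγD]
  have hc0 : Matrix.vecMul c (Matrix.of fun i j => (G i j).coeff (γ i)) = 0 := by
    funext j
    rw [← key j]
    apply Polynomial.coeff_eq_zero_of_degree_lt
    exact lt_of_lt_of_le (hw j) (Nat.cast_le.mpr hDL)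
  have hczero := hrank c hc0
  obtain ⟨i1, hi1S, hD1⟩ := Finset.exists_mem_eq_sup S ⟨i0, hi0S⟩
    (fun i => (w i).natDegree + γ i)
  have hwi1 : w i1 ≠ 0 := by
    simpa [hS] using (Finset.mem_filter.mp hi1S).2
  have hD1' : D = (w i1).natDegree + γ i1 := hD.trans hD1
  have : c i1 ≠ 0 := by
    rw [hcdef]
    beta_reduce
    rw [if_pos (by omega)]
    have hsub : D - γ i1 = (w i1).natDegree := by omega
    rw [hsub, ← Polynomial.leadingCoeff]
    exact Polynomial.leadingCoeff_ne_zero.mpr hwi1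
  rw [hczero] at this
  exact this rfl


lemma vecMul_coeff {m m' : ℕ} (w : Fin m → Polynomial F)
    (G : Matrix (Fin m) (Fin m') (Polynomial F)) (j : Fin m') (t : ℕ) :
    (Matrix.vecMul w G j).coeff t = ∑ i, (w i * G i j).coeff t := by
  rw [Matrix.vecMul, dotProduct, Polynomial.finset_sum_coeff]

lemma coeff_mul_eq_zero_low (p q : Polynomial F) (t : ℕ)
    (h : ∀ a, a ≤ t → p.coeff a = 0) : (p * q).coeff t = 0 := by
  rw [Polynomial.coeff_mul]
  apply Finset.sum_eq_zero
  rintro ⟨a, b⟩ hab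
  rw [Finset.HasAntidiagonal.mem_antidiagonal] at hab
  rw [h a (by omega), zero_mul]

noncomputable def lowPart (p : Polynomial F) (m : ℕ) : Polynomial F :=
  ∑ t ∈ Finset.range m, Polynomial.C (p.coeff t) * Polynomial.X ^ t

lemma lowPart_coeff (p : Polynomial F) (m t : ℕ) :
    (lowPart p m).coeff t = if t < m then p.coeff t else 0 := by
  rw [lowPart, Polynomial.finset_sum_coeff]
  simp only [Polynomial.coeff_C_mul, Polynomial.coeff_X_pow, mul_ite, mul_one, mul_zero]
  rw [Finset.sum_ite_eq (Finset.range m) t (fun t' => p.coeff t')]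
  simp [Finset.mem_range]

end Aux

set_option synthInstance.maxHeartbeats 1000000
set_option maxHeartbeats 1000000

theorem stmt8 {F : Type*} [Field F] {k n : ℕ}
    (G : Matrix (Fin k) (Fin n) (Polynomial F)) (γ : Fin k → ℕ)
    (hbasic : IsBasic G)
    (hγ : ∀ i, rowDeg G i = (γ i : WithBot ℕ))
    (hmin : ocl G = ∑ i, γ i)
    (u : Fin k → Polynomial F) (N L : ℕ)
    (hv0 : (fun j => (Matrix.vecMul u G j).coeff 0) ≠ (0 : Fin n → F))
    (hN : (Finset.univ.sup fun j : Fin n => (Matrix.vecMul u G j).degree) = (N : WithBot ℕ))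
    (hNpos : 0 < N) (hL1 : 1 ≤ L) (hLN : L ≤ N)
    (x : StateIdx γ → LaurentSeries F)
    (hx : x = (polyToLS F Polynomial.X) •
      Matrix.vecMul (fun i => polyToLS F (u i))
        ((ccfB F γ).map (fun a => polyToLS F (Polynomial.C a)) *
          (1 - (polyToLS F Polynomial.X) •
            (ccfA F γ).map (fun a => polyToLS F (Polynomial.C a)))⁻¹)) :
    (∀ s, (x s).coeff (L : ℤ) = 0) ↔
      ∃ vt vh : Fin n → Polynomial F,
        (∃ w : Fin k → Polynomial F, vt = Matrix.vecMul w G) ∧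
        (∃ w : Fin k → Polynomial F, vh = Matrix.vecMul w G) ∧
        vt ≠ 0 ∧ vh ≠ 0 ∧ Matrix.vecMul u G = vt + vh ∧
        (∀ j, (vt j).degree < (L : WithBot ℕ)) ∧
        (∀ j, ∀ t : ℕ, t < L → (vh j).coeff t = 0) := by
  have hdeg : ∀ i j, (G i j).natDegree ≤ γ i := by
    intro i j
    apply Polynomial.natDegree_le_iff_degree_le.mpr
    have h1 : (G i j).degree ≤ rowDeg G i :=
      Finset.le_sup (f := fun j => (G i j).degree) (Finset.mem_univ j)
    rwa [hγ i] at h1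
  have hxcoeff : ∀ (i : Fin k) (a : Fin (γ i)), (x ⟨i, a⟩).coeff (L : ℤ) =
      if (a : ℕ) + 1 ≤ L then (u i).coeff (L - ((a : ℕ) + 1)) else 0 := by
    intro i a
    rw [x_formula γ u x hx i a, polyToLS_coeff, Polynomial.coeff_mul_X_pow']
  constructor
  · intro hxL
    have Q : ∀ i t, t < L → L ≤ t + γ i → (u i).coeff t = 0 := by
      intro i t ht hLt
      have hb : L - 1 - t < γ i := by omega
      have h1 := hxL ⟨i, ⟨L - 1 - t, hb⟩⟩
      rw [hxcoeff i ⟨L - 1 - t, hb⟩] at h1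
      have h3 : ((⟨L - 1 - t, hb⟩ : Fin (γ i)) : ℕ) = L - 1 - t := rfl
      rw [h3, if_pos (by omega)] at h1
      have he : L - (L - 1 - t + 1) = t := by omega
      rwa [he] at h1
    have hdegvt : ∀ j,
        ((Matrix.vecMul (fun i => lowPart (u i) (L - γ i)) G) j).degree < (L : WithBot ℕ) := by
      intro j
      rw [Polynomial.degree_lt_iff_coeff_zero]
      intro m hm
      rw [vecMul_coeff]
      apply Finset.sum_eq_zero
      intro i _
      rw [Polynomial.coeff_mul]
      apply Finset.sum_eq_zero
      rintro ⟨a, b⟩ hab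
      rw [Finset.HasAntidiagonal.mem_antidiagonal] at hab
      by_cases hbc : a < L - γ i
      · have hgb : γ i < b := by omega
        rw [Polynomial.coeff_eq_zero_of_natDegree_lt (lt_of_le_of_lt (hdeg i j) hgb), mul_zero]
      · rw [lowPart_coeff, if_neg hbc, zero_mul]
    have hlowvh : ∀ j t, t < L →
        ((Matrix.vecMul (fun i => u i - lowPart (u i) (L - γ i)) G) j).coeff t = 0 := by
      intro j t htL
      rw [vecMul_coeff]
      apply Finset.sum_eq_zero
      intro i _
      apply coeff_mul_eq_zero_low
      intro a ha
      rw [Polynomial.coeff_sub, lowPart_coeff]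
      by_cases hbc : a < L - γ i
      · rw [if_pos hbc, sub_self]
      · rw [if_neg hbc, sub_zero]
        exact Q i a (by omega) (by omega)
    have hsum : Matrix.vecMul u G =
        Matrix.vecMul (fun i => lowPart (u i) (L - γ i)) G +
        Matrix.vecMul (fun i => u i - lowPart (u i) (L - γ i)) G := by
      have huu : ((fun i => lowPart (u i) (L - γ i)) +
          (fun i => u i - lowPart (u i) (L - γ i))) = u := by
        funext i
        simp
      rw [← Matrix.add_vecMul, huu]
    refine ⟨Matrix.vecMul (fun i => lowPart (u i) (L - γ i)) G,
      Matrix.vecMul (fun i => u i - lowPart (u i) (L - γ i)) G,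
      ⟨_, rfl⟩, ⟨_, rfl⟩, ?_, ?_, hsum, hdegvt, hlowvh⟩
    · -- vt ≠ 0
      obtain ⟨j0, hj0⟩ : ∃ j, ((Matrix.vecMul u G) j).coeff 0 ≠ 0 := by
        by_contra hconn
        push_neg at hconn
        exact hv0 (funext fun j => hconn j)
      intro h0
      apply hj0
      have h1 := congrFun hsum j0
      rw [h1, Pi.add_apply, Polynomial.coeff_add, hlowvh j0 0 (by omega),
        congrFun h0 j0]
      simp
    · -- vh ≠ 0
      have hnuniv : (Finset.univ : Finset (Fin n)).Nonempty := by
        rcases Finset.eq_empty_or_nonempty (Finset.univ : Finset (Fin n)) with he | h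
        · rw [he, Finset.sup_empty] at hN
          exact absurd hN (by simp)
        · exact h
      obtain ⟨j1, _, hj1⟩ := Finset.exists_mem_eq_sup Finset.univ hnuniv
        (fun j : Fin n => (Matrix.vecMul u G j).degree)
      have hN' : (Matrix.vecMul u G j1).degree = (N : WithBot ℕ) := hj1.symm.trans hN
      have hcN : (Matrix.vecMul u G j1).coeff N ≠ 0 :=
        Polynomial.coeff_ne_zero_of_eq_degree hN'
      intro h0
      apply hcN
      have h1 := congrFun hsum j1
      rw [h1, Pi.add_apply, Polynomial.coeff_add, congrFun h0 j1,
        Polynomial.coeff_eq_zero_of_degree_lt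
          (lt_of_lt_of_le (hdegvt j1) (Nat.cast_le.mpr hLN))]
      simp
  · rintro ⟨vt, vh, ⟨w1, hw1⟩, ⟨w2, hw2⟩, hvt0, hvh0, hsum, hdegvt, hlowvh⟩
    obtain ⟨H, hH⟩ := hbasic
    have hu : u = w1 + Matrix.vecMul vh H := by
      have h1 : Matrix.vecMul (Matrix.vecMul u G) H = u := by
        rw [Matrix.vecMul_vecMul, hH, Matrix.vecMul_one]
      calc u = Matrix.vecMul (Matrix.vecMul u G) H := h1.symm
        _ = Matrix.vecMul (vt + vh) H := by rw [hsum]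
        _ = Matrix.vecMul vt H + Matrix.vecMul vh H := by rw [Matrix.add_vecMul]
        _ = w1 + Matrix.vecMul vh H := by
            rw [hw1, Matrix.vecMul_vecMul, hH, Matrix.vecMul_one]
    have hrank := Gh_rank G γ ⟨H, hH⟩ hdeg hmin
    have hpd := pd_lemma G γ hdeg hrank w1 L (fun j => by rw [← hw1]; exact hdegvt j)
    intro s
    obtain ⟨i, a⟩ := s
    rw [hxcoeff i a]
    split
    · next hle =>
      have hia := a.isLt
      have hcw1 : (w1 i).coeff (L - ((a : ℕ) + 1)) = 0 := hpd i _ (by omega)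
      have hcw2 : ((Matrix.vecMul vh H) i).coeff (L - ((a : ℕ) + 1)) = 0 := by
        rw [vecMul_coeff]
        apply Finset.sum_eq_zero
        intro j _
        exact coeff_mul_eq_zero_low _ _ _ (fun b hb => hlowvh j b (by omega))
      rw [hu, Pi.add_apply, Polynomial.coeff_add, hcw1, hcw2, add_zero]
    · rfl
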